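/- If Z satisfies 𝔓(Z > 0) = 1, 0 < E[Z] < ∞ and E[|log Z|] < ∞, then log(1 + S·E[Z]) − E[log(1 + S·Z)] → log(E[Z]) − E[log Z] as S → ∞, and log(E[Z]) − E[log Z] ≥ 0. That is, the high-SNR capacity gap between the AWGN channel with the same average SNR and the fading channel with rate adaptation (equivalently, with optimal power and rate adaptation) equals log(E[Z]) − E[log Z], which is nonnegative for every fading distribution. -/

import Mathlib

open MeasureTheory Filter Topology

/-- **High-SNR gap between AWGN and rate adaptation.** If `Z` satisfies `P(Z > 0) = 1`,
`0 < E[Z] < ∞` and `E[|log Z|] < ∞`, then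
`log(1 + S·E[Z]) − E[log(1 + S·Z)] → log(E[Z]) − E[log Z]` as `S → ∞`, and this limit is
nonnegative. -/
theorem awgn_sub_ra_gap
    {Ω : Type*} [MeasurableSpace Ω] (P : Measure Ω) [IsProbabilityMeasure P]
    (Z : Ω → ℝ) (hZ : Measurable Z) (hZpos : P {ω | 0 < Z ω} = 1)
    (hZ_int : Integrable Z P) (hZ_mean_pos : 0 < ∫ ω, Z ω ∂P)
    (hlog_int : Integrable (fun ω => |Real.log (Z ω)|) P) :
    Tendsto (fun S => Real.log (1 + S * ∫ ω, Z ω ∂P) - ∫ ω, Real.log (1 + S * Z ω) ∂P)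
      atTop (𝓝 (Real.log (∫ ω, Z ω ∂P) - ∫ ω, Real.log (Z ω) ∂P)) ∧
    0 ≤ Real.log (∫ ω, Z ω ∂P) - ∫ ω, Real.log (Z ω) ∂P := by
  set m := ∫ ω, Z ω ∂P with hm_def
  -- a.e. positivity
  have hae : ∀ᵐ ω ∂P, 0 < Z ω := by
    rw [ae_iff]
    have hms : MeasurableSet {ω | 0 < Z ω} := measurableSet_lt measurable_const hZ
    have hc : P {ω | 0 < Z ω}ᶜ = 0 := by
      rw [measure_compl hms (measure_ne_top P _), hZpos, measure_univ, tsub_self]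
    exact hc
  have hlogZ_m : AEStronglyMeasurable (fun ω => Real.log (Z ω)) P :=
    (Real.measurable_log.comp hZ).aestronglyMeasurable
  have hlogZ_int : Integrable (fun ω => Real.log (Z ω)) P := by
    refine hlog_int.mono' hlogZ_m ?_
    filter_upwards with ω
    simp [Real.norm_eq_abs]
  -- Part 2: Jensen via tangent line at m
  have hint1 : Integrable (fun ω => Z ω / m) P := hZ_int.div_const m
  have hint2 : Integrable (fun ω => Z ω / m - 1) P := hint1.sub (integrable_const 1)
  have hint3 : Integrable (fun ω => Z ω / m - 1 + Real.log m) P :=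
    hint2.add (integrable_const _)
  have h2 : ∫ ω, Real.log (Z ω) ∂P ≤ Real.log m := by
    have key : ∀ᵐ ω ∂P, Real.log (Z ω) ≤ Z ω / m - 1 + Real.log m := by
      filter_upwards [hae] with ω hω
      have h := Real.log_le_sub_one_of_pos (show 0 < Z ω / m by positivity)
      rw [Real.log_div hω.ne' hZ_mean_pos.ne'] at h
      linarith
    have hle := integral_mono_ae hlogZ_int hint3 key
    calc ∫ ω, Real.log (Z ω) ∂P ≤ ∫ ω, (Z ω / m - 1 + Real.log m) ∂P := hle
      _ = Real.log m := by
          rw [integral_add hint2 (integrable_const _),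
            integral_sub hint1 (integrable_const 1), integral_div,
            integral_const, integral_const]
          simp [← hm_def, div_self hZ_mean_pos.ne']
  -- bound for dominated convergence
  have hbound : ∀ S : ℝ, 1 ≤ S → ∀ᵐ ω ∂P,
      |Real.log (1 / S + Z ω)| ≤ |Real.log (Z ω)| + Z ω := by
    intro S hS
    filter_upwards [hae] with ω hω
    have hS0 : (0 : ℝ) < S := lt_of_lt_of_le one_pos hS
    have ht0 : (0 : ℝ) < 1 / S := by positivity
    have ht1 : 1 / S ≤ 1 := by rw [div_le_one hS0]; exact hS
    rw [abs_le]
    constructor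
    · have h1 : Real.log (Z ω) ≤ Real.log (1 / S + Z ω) := by
        apply Real.log_le_log hω; linarith
      have h2 := neg_abs_le (Real.log (Z ω))
      linarith
    · have h1 : Real.log (1 / S + Z ω) ≤ Real.log (1 + Z ω) := by
        apply Real.log_le_log (by positivity); linarith
      have h2 : Real.log (1 + Z ω) ≤ Z ω := by
        have := Real.log_le_sub_one_of_pos (show (0 : ℝ) < 1 + Z ω by linarith)
        linarith
      have := abs_nonneg (Real.log (Z ω))
      linarith
  have hgint : Integrable (fun ω => |Real.log (Z ω)| + Z ω) P := hlog_int.add hZ_int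
  have hmS : ∀ S : ℝ, AEStronglyMeasurable (fun ω => Real.log (1 / S + Z ω)) P :=
    fun S => (Real.measurable_log.comp (measurable_const.add hZ)).aestronglyMeasurable
  have hintS : ∀ S : ℝ, 1 ≤ S → Integrable (fun ω => Real.log (1 / S + Z ω)) P := by
    intro S hS
    refine hgint.mono' (hmS S) ?_
    filter_upwards [hbound S hS] with ω h
    simpa [Real.norm_eq_abs] using h
  -- limit of ∫ log (1/S + Z)
  have hB : Tendsto (fun S : ℝ => ∫ ω, Real.log (1 / S + Z ω) ∂P) atTop
      (𝓝 (∫ ω, Real.log (Z ω) ∂P)) := by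
    apply tendsto_integral_filter_of_dominated_convergence
      (fun ω => |Real.log (Z ω)| + Z ω)
    · filter_upwards with S; exact hmS S
    · filter_upwards [eventually_ge_atTop (1 : ℝ)] with S hS
      filter_upwards [hbound S hS] with ω h
      simpa [Real.norm_eq_abs] using h
    · exact hgint
    · filter_upwards [hae] with ω hω
      have h1 : Tendsto (fun S : ℝ => 1 / S + Z ω) atTop (𝓝 (Z ω)) := by
        have := tendsto_inv_atTop_zero.add (tendsto_const_nhds (α := ℝ) (x := Z ω))
        simpa [one_div] using this
      have h2 := (Real.continuousAt_log hω.ne').tendsto.comp h1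
      simpa [Function.comp_def] using h2
  -- limit of log(1 + 1/(S m))
  have hA : Tendsto (fun S : ℝ => Real.log (1 + 1 / (S * m))) atTop (𝓝 0) := by
    have hmul : Tendsto (fun S : ℝ => S * m) atTop atTop :=
      Tendsto.atTop_mul_const hZ_mean_pos tendsto_id
    have h1 : Tendsto (fun S : ℝ => 1 / (S * m)) atTop (𝓝 0) := by
      simp only [one_div]
      exact tendsto_inv_atTop_zero.comp hmul
    have h2 : Tendsto (fun S : ℝ => 1 + 1 / (S * m)) atTop (𝓝 1) := by
      simpa using (tendsto_const_nhds (α := ℝ) (x := (1:ℝ))).add h1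
    have h3 := (Real.continuousAt_log one_ne_zero).tendsto.comp h2
    simpa [Function.comp_def] using h3
  -- combined limit
  have hG : Tendsto (fun S : ℝ => Real.log (1 + 1 / (S * m)) + Real.log m
      - ∫ ω, Real.log (1 / S + Z ω) ∂P) atTop
      (𝓝 (Real.log m - ∫ ω, Real.log (Z ω) ∂P)) := by
    have := (hA.add (tendsto_const_nhds (x := Real.log m))).sub hB
    simpa using this
  constructor
  · refine hG.congr' ?_
    filter_upwards [eventually_ge_atTop (1 : ℝ)] with S hS
    have hS0 : (0 : ℝ) < S := lt_of_lt_of_le one_pos hS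
    have e1 : ∫ ω, Real.log (1 + S * Z ω) ∂P
        = Real.log S + ∫ ω, Real.log (1 / S + Z ω) ∂P := by
      have ecg : ∫ ω, Real.log (1 + S * Z ω) ∂P
          = ∫ ω, (Real.log S + Real.log (1 / S + Z ω)) ∂P := by
        refine integral_congr_ae ?_
        filter_upwards [hae] with ω hω
        have hx : 1 + S * Z ω = S * (1 / S + Z ω) := by field_simp
        rw [hx, Real.log_mul hS0.ne' (by positivity)]
      rw [ecg, integral_add (integrable_const _) (hintS S hS), integral_const]
      simp
    have e2 : Real.log (1 + 1 / (S * m))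
        = Real.log (1 + S * m) - Real.log S - Real.log m := by
      have hsm : (0 : ℝ) < S * m := by positivity
      have hx : 1 + 1 / (S * m) = (1 + S * m) / (S * m) := by field_simp; ring
      rw [hx, Real.log_div (by positivity) hsm.ne', Real.log_mul hS0.ne' hZ_mean_pos.ne']
      ring
    rw [e1, e2]
    ring
  · linarith
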